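/- Let S be a C-semigroup acting continuously on a Polish metric space (X,d). Suppose the system is an M-system (topologically transitive with a dense set of almost periodic points) and Eq(X) ≠ ∅. Then the system is minimal and equicontinuous. -/

import Mathlib

section Aux

variable {S X : Type*} [TopologicalSpace S] [Semigroup S] [MetricSpace X] [SMul S X]

/-- A compact family of maps is equicontinuous at every point. -/
lemma aux_compact_eq (hcont : Continuous fun p : S × X => p.1 • p.2)
    {C : Set S} (hcomp : IsCompact C) (a : X) {ε : ℝ} (hε : 0 < ε) :
    ∃ δ > 0, ∀ p : X, dist a p < δ → ∀ u ∈ C, dist (u • a) (u • p) < ε := by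
  have key : ∀ u : S, ∃ W : Set S, W ∈ nhds u ∧ ∃ δ > 0, ∀ u' ∈ W, ∀ p : X,
      dist a p < δ → dist (u' • a) (u' • p) < ε := by
    intro u
    have h1 : ContinuousAt (fun q : S × X => q.1 • q.2) (u, a) := hcont.continuousAt
    have h2 : Metric.ball (u • a) (ε / 2) ∈ nhds (u • a) :=
      Metric.ball_mem_nhds _ (by linarith)
    have h3 : (fun q : S × X => q.1 • q.2) ⁻¹' Metric.ball (u • a) (ε / 2) ∈
        nhds u ×ˢ nhds a := by
      rw [← nhds_prod_eq]; exact h1 h2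
    obtain ⟨W, hW, T, hT, hsub⟩ := Filter.mem_prod_iff.mp h3
    obtain ⟨δ, hδ, hball⟩ := Metric.mem_nhds_iff.mp hT
    refine ⟨W, hW, δ, hδ, ?_⟩
    intro u' hu' p hp
    have hpT : p ∈ T := hball (by simpa [Metric.mem_ball, dist_comm] using hp)
    have haT : a ∈ T := hball (Metric.mem_ball_self hδ)
    have h4 : dist (u' • p) (u • a) < ε / 2 := hsub (Set.mk_mem_prod hu' hpT)
    have h5 : dist (u' • a) (u • a) < ε / 2 := hsub (Set.mk_mem_prod hu' haT)
    calc dist (u' • a) (u' • p) ≤ dist (u' • a) (u • a) + dist (u • a) (u' • p) :=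
          dist_triangle _ _ _
      _ < ε / 2 + ε / 2 := by rw [dist_comm (u • a) (u' • p)]; linarith
      _ = ε := by ring
  choose W hW δf hδf hspec using key
  obtain ⟨t, -, ht⟩ := hcomp.elim_nhds_subcover W fun u _ => hW u
  rcases t.eq_empty_or_nonempty with h | hne
  · refine ⟨1, one_pos, fun p _ u hu => ?_⟩
    subst h
    exact absurd (ht hu) (by simp)
  · refine ⟨t.inf' hne δf, by show (0:ℝ) < _; rw [Finset.lt_inf'_iff]; exact fun i _ => hδf i, ?_⟩
    intro p hp u hu
    obtain ⟨i, hi, hui⟩ := Set.mem_iUnion₂.mp (ht hu)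
    exact hspec i u hui p (lt_of_lt_of_le hp (Finset.inf'_le _ hi))

/-- Steering a compact "minimal" set into a small ball with finitely many semigroup elements. -/
lemma aux_steer (hcont : Continuous fun p : S × X => p.1 • p.2)
    {K : Set X} (hK : IsCompact K) (w : X)
    (hmin : ∀ k ∈ K, w ∈ closure {y : X | ∃ s : S, s • k = y}) (s₀ : S)
    {r : ℝ} (hr : 0 < r) :
    ∃ F : Finset S, ∀ k ∈ K, ∃ f ∈ F, dist (f • k) w < r := by
  classical
  have key : ∀ k : X, ∃ f : S, k ∈ K → dist (f • k) w < r := by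
    intro k
    by_cases hk : k ∈ K
    · obtain ⟨y, ⟨s, rfl⟩, hy⟩ := Metric.mem_closure_iff.mp (hmin k hk) r hr
      exact ⟨s, fun _ => by rwa [dist_comm]⟩
    · exact ⟨s₀, fun h => absurd h hk⟩
  choose f hf using key
  have hcont' : ∀ g : S, Continuous fun p : X => g • p := fun g =>
    hcont.comp (continuous_const.prodMk continuous_id)
  have hUopen : ∀ k : X, IsOpen {p : X | dist (f k • p) w < r} :=
    fun k => isOpen_lt ((hcont' (f k)).dist continuous_const) continuous_const
  obtain ⟨t, -, ht⟩ := hK.elim_nhds_subcover (fun k => {p : X | dist (f k • p) w < r})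
    (fun k hk => (hUopen k).mem_nhds (hf k hk))
  refine ⟨t.image f, fun k hk => ?_⟩
  obtain ⟨i, hi, hki⟩ := Set.mem_iUnion₂.mp (ht hk)
  exact ⟨f i, Finset.mem_image_of_mem f hi, hki⟩

/-- Transfer of equicontinuity: if the orbit of `a` approaches the equicontinuity
point `x₀` arbitrarily well, then `a` is an equicontinuity point.  Uses the
C-semigroup property. -/
lemma aux_transfer (hact : ∀ (s t : S) (x : X), (s * t) • x = s • t • x)
    (hcont : Continuous fun p : S × X => p.1 • p.2)
    (hC : ∀ s₀ : S, IsCompact (closure {s : S | ¬ ∃ t : S, t * s₀ = s}))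
    (x₀ : X)
    (hx₀ : ∀ ε > 0, ∃ δ > 0, ∀ x : X, dist x₀ x < δ → ∀ s : S, dist (s • x₀) (s • x) < ε)
    (a : X) (ha : ∀ r > 0, ∃ s : S, dist x₀ (s • a) < r) :
    ∀ ε > 0, ∃ δ > 0, ∀ p : X, dist a p < δ → ∀ s : S, dist (s • a) (s • p) < ε := by
  intro ε hε
  obtain ⟨δ₀, hδ₀, h₀⟩ := hx₀ (ε / 3) (by linarith)
  obtain ⟨s₁, hs₁⟩ := ha (δ₀ / 2) (by linarith)
  have hconts : Continuous fun p : X => s₁ • p :=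
    hcont.comp (continuous_const.prodMk continuous_id)
  obtain ⟨δ₁, hδ₁, h₁⟩ := Metric.continuousAt_iff.mp (hconts.continuousAt (x := a))
    (δ₀ / 2) (by linarith)
  obtain ⟨δ₂, hδ₂, h₂⟩ := aux_compact_eq hcont (hC s₁) a hε
  refine ⟨min δ₁ δ₂, lt_min hδ₁ hδ₂, fun p hp s => ?_⟩
  by_cases hs : ∃ t : S, t * s₁ = s
  · obtain ⟨t, rfl⟩ := hs
    have hpa : dist (s₁ • p) (s₁ • a) < δ₀ / 2 :=
      h₁ (by rw [dist_comm]; exact lt_of_lt_of_le hp (min_le_left _ _))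
    have ha1 : dist x₀ (s₁ • a) < δ₀ := by linarith
    have ha2 : dist x₀ (s₁ • p) < δ₀ := by
      have htri := dist_triangle x₀ (s₁ • a) (s₁ • p)
      have : dist (s₁ • a) (s₁ • p) < δ₀ / 2 := by rw [dist_comm]; exact hpa
      linarith
    have e1 := h₀ (s₁ • a) ha1 t
    have e2 := h₀ (s₁ • p) ha2 t
    rw [hact t s₁ a, hact t s₁ p]
    calc dist (t • s₁ • a) (t • s₁ • p)
        ≤ dist (t • s₁ • a) (t • x₀) + dist (t • x₀) (t • s₁ • p) := dist_triangle _ _ _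
      _ < ε / 3 + ε / 3 := by rw [dist_comm (t • s₁ • a) (t • x₀)]; linarith
      _ < ε := by linarith
  · exact h₂ p (lt_of_lt_of_le hp (min_le_right _ _)) s (subset_closure hs)

end Aux

/-- An M-system of a C-semigroup on a Polish metric space with an
equicontinuity point is minimal and equicontinuous. -/
theorem stmt_14 {S X : Type*} [TopologicalSpace S] [Semigroup S] [MetricSpace X]
    [PolishSpace X] [SMul S X]
    (hact : ∀ (s t : S) (x : X), (s * t) • x = s • t • x)
    (hcont : Continuous fun p : S × X => p.1 • p.2)
    (hC : ∀ s₀ : S, IsCompact (closure {s : S | ¬ ∃ t : S, t * s₀ = s}))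
    (hTT : ∀ U V : Set X, IsOpen U → U.Nonempty → IsOpen V → V.Nonempty →
      ∃ s : S, ∃ v ∈ V, s • v ∈ U)
    (hAP : Dense {x : X | IsCompact (closure {y : X | ∃ s : S, s • x = y}) ∧
      ∀ y ∈ closure {y : X | ∃ s : S, s • x = y},
        closure {y : X | ∃ s : S, s • x = y} ⊆ closure {z : X | ∃ s : S, s • y = z}})
    (hEq : ∃ x₀ : X, ∀ ε > 0, ∃ δ > 0, ∀ x : X, dist x₀ x < δ →
      ∀ s : S, dist (s • x₀) (s • x) < ε) :
    (∀ x : X, Dense {y : X | ∃ s : S, s • x = y}) ∧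
    (∀ x₀ : X, ∀ ε > 0, ∃ δ > 0, ∀ x : X, dist x₀ x < δ →
      ∀ s : S, dist (s • x₀) (s • x) < ε) := by
  classical
  obtain ⟨x₀, hx₀⟩ := hEq
  have hXne : Nonempty X := ⟨x₀⟩
  obtain ⟨s₀, v₀, -, -⟩ := hTT Set.univ Set.univ isOpen_univ ⟨x₀, trivial⟩
    isOpen_univ ⟨x₀, trivial⟩
  -- Baire property of the Polish space
  haveI hB : BaireSpace X := by
    exact inferInstance
  -- a countable basis and density of transitive points
  obtain ⟨b, hbc, hbne, hbasis⟩ := TopologicalSpace.exists_countable_basis X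
  have hGopen : ∀ U ∈ b, IsOpen {x : X | ∃ s : S, s • x ∈ U} := by
    intro U hU
    have hrw : {x : X | ∃ s : S, s • x ∈ U} = ⋃ s : S, (fun x : X => s • x) ⁻¹' U := by
      ext x; simp [Set.mem_iUnion]
    rw [hrw]
    exact isOpen_iUnion fun s =>
      (hbasis.isOpen hU).preimage (hcont.comp (continuous_const.prodMk continuous_id))
  have hGdense : ∀ U ∈ b, Dense {x : X | ∃ s : S, s • x ∈ U} := by
    intro U hU
    rw [dense_iff_inter_open]
    intro V hV hVne
    obtain ⟨s, v, hvV, hsv⟩ := hTT U V (hbasis.isOpen hU)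
      (Set.nonempty_iff_ne_empty.mpr (fun h => hbne (h ▸ hU))) hV hVne
    exact ⟨v, hvV, s, hsv⟩
  have hdense := dense_biInter_of_isOpen hGopen hbc hGdense
  obtain ⟨z, hz⟩ := hdense.nonempty
  have hztrans : Dense {y : X | ∃ s : S, s • z = y} := by
    rw [dense_iff_inter_open]
    rintro V hV ⟨x, hx⟩
    obtain ⟨U, hUb, hxU, hUV⟩ := hbasis.exists_subset_of_mem_open hx hV
    obtain ⟨s, hsU⟩ := Set.mem_iInter₂.mp hz U hUb
    exact ⟨s • z, hUV hsU, s, rfl⟩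
  -- approach a point by the orbit of a point with dense orbit
  have horbclose : ∀ (q a : X), Dense {y : X | ∃ s : S, s • a = y} →
      ∀ r, 0 < r → ∃ s : S, dist q (s • a) < r := by
    intro q a hd r hr
    obtain ⟨y, ⟨s, rfl⟩, hy⟩ := Metric.mem_closure_iff.mp (hd q) r hr
    exact ⟨s, hy⟩
  -- z is an equicontinuity point
  have hzeq : ∀ ε > 0, ∃ δ > 0, ∀ p : X, dist z p < δ → ∀ s : S, dist (s • z) (s • p) < ε :=
    aux_transfer hact hcont hC x₀ hx₀ z (fun r hr => horbclose x₀ z hztrans r hr)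
  -- near z there are points lying in compact minimal invariant sets
  have spear : ∀ ρ > 0, ∃ w : X, ∃ K : Set X, IsCompact K ∧ (∀ s : S, s • w ∈ K) ∧
      (∀ k ∈ K, w ∈ closure {y : X | ∃ s : S, s • k = y}) ∧ dist z w < ρ := by
    intro ρ hρ
    obtain ⟨δ', hδ', hspec⟩ := hzeq (ρ / 2) (by linarith)
    obtain ⟨y, hyAP, hzy⟩ := Metric.mem_closure_iff.mp (hAP z) δ' hδ'
    obtain ⟨hKc, hKmin⟩ := hyAP
    obtain ⟨s, hs⟩ := horbclose z z hztrans (ρ / 2) (by linarith)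
    refine ⟨s • y, closure {y' : X | ∃ s' : S, s' • y = y'}, hKc, ?_, ?_, ?_⟩
    · intro s'
      exact subset_closure ⟨s' * s, hact s' s y⟩
    · intro k hk
      exact hKmin k hk (subset_closure ⟨s, rfl⟩)
    · calc dist z (s • y) ≤ dist z (s • z) + dist (s • z) (s • y) := dist_triangle _ _ _
        _ < ρ / 2 + ρ / 2 := by have := hspec y hzy s; linarith
        _ = ρ := by ring
  -- syndetic returns of z near itself
  have synd : ∀ ε > 0, ∃ F : Finset S, ∀ s : S, ∃ f ∈ F, dist ((f * s) • z) z < ε := by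
    intro ε hε
    obtain ⟨δ', hδ', hspec⟩ := hzeq (ε / 3) (by linarith)
    obtain ⟨w, K, hKc, horbw, hKmin, hzw⟩ := spear (min δ' (ε / 3)) (by positivity)
    obtain ⟨F, hF⟩ := aux_steer hcont hKc w hKmin s₀ (r := ε / 6) (by linarith)
    refine ⟨F, fun s => ?_⟩
    obtain ⟨f, hfF, hfs⟩ := hF (s • w) (horbw s)
    refine ⟨f, hfF, ?_⟩
    have h1 : dist ((f * s) • z) ((f * s) • w) < ε / 3 :=
      hspec w (lt_of_lt_of_le hzw (min_le_left _ _)) (f * s)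
    have h4 : dist ((f * s) • w) w < ε / 6 := by rw [hact f s w]; exact hfs
    have h5 : dist w z < ε / 3 := by
      rw [dist_comm]; exact lt_of_lt_of_le hzw (min_le_right _ _)
    have htri := dist_triangle4 ((f * s) • z) ((f * s) • w) w z
    linarith
  -- every point can be steered arbitrarily close to z
  have hreach : ∀ (x : X), ∀ ε, 0 < ε → ∃ f : S, dist (f • x) z < ε := by
    intro x ε hε
    obtain ⟨F, hF⟩ := synd (ε / 2) (by linarith)
    have hclosed : IsClosed (⋃ f ∈ F, {q : X | dist (f • q) z ≤ ε / 2}) := by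
      apply isClosed_biUnion_finset
      intro f _
      exact isClosed_le
        ((hcont.comp (continuous_const.prodMk continuous_id)).dist continuous_const)
        continuous_const
    have hsub : {y : X | ∃ s : S, s • z = y} ⊆
        ⋃ f ∈ F, {q : X | dist (f • q) z ≤ ε / 2} := by
      rintro _ ⟨s, rfl⟩
      obtain ⟨f, hfF, hfs⟩ := hF s
      refine Set.mem_biUnion hfF ?_
      show dist (f • (s • z)) z ≤ ε / 2
      rw [← hact f s z]
      exact le_of_lt hfs
    have hx : x ∈ ⋃ f ∈ F, {q : X | dist (f • q) z ≤ ε / 2} :=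
      closure_minimal hsub hclosed (hztrans x)
    obtain ⟨f, _, hfx⟩ := Set.mem_iUnion₂.mp hx
    exact ⟨f, lt_of_le_of_lt hfx (by linarith)⟩
  -- minimality
  have hmin : ∀ x : X, Dense {y : X | ∃ s : S, s • x = y} := by
    intro x
    rw [Metric.dense_iff]
    intro q r hr
    obtain ⟨s, hs⟩ := horbclose q z hztrans (r / 2) (by linarith)
    have hconts : Continuous fun p : X => s • p :=
      hcont.comp (continuous_const.prodMk continuous_id)
    obtain ⟨ρ, hρ, hρspec⟩ := Metric.continuousAt_iff.mp (hconts.continuousAt (x := z))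
      (r / 2) (by linarith)
    obtain ⟨f, hf⟩ := hreach x ρ hρ
    have hclose : dist (s • (f • x)) (s • z) < r / 2 := hρspec hf
    refine ⟨s • (f • x), ?_, s * f, hact s f x⟩
    rw [Metric.mem_ball]
    calc dist (s • (f • x)) q ≤ dist (s • (f • x)) (s • z) + dist (s • z) q :=
          dist_triangle _ _ _
      _ < r / 2 + r / 2 := by rw [dist_comm (s • z) q]; linarith
      _ = r := by ring
  exact ⟨hmin, fun a ε hε =>
    aux_transfer hact hcont hC x₀ hx₀ a (fun r hr => horbclose x₀ a (hmin a) r hr) ε hε⟩
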